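/- For every nontrivial connected graph G, λ(G) ≤ λ⁺(G) ≤ rd(G) ≤ χ′(G) ≤ Δ(G) + 1, where λ is the edge-connectivity, λ⁺ the upper edge-connectivity, rd the rainbow disconnection number, χ′ the chromatic index, and Δ the maximum degree. -/

import Mathlib

variable {V : Type*} [Fintype V] [DecidableEq V]

/-- `S` separates `s` and `t` in `G`: after deleting the edges of `S`,
`s` and `t` are not reachable from each other. -/
def Separates (G : SimpleGraph V) (S : Set (Sym2 V)) (s t : V) : Prop :=
  ¬ (G.deleteEdges S).Reachable s t

/-- `λ(s,t)`: minimum size of a set of edges of `G` separating `s` and `t`. -/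
noncomputable def lamST (G : SimpleGraph V) (s t : V) : ℕ :=
  sInf {n | ∃ S : Finset (Sym2 V), ↑S ⊆ G.edgeSet ∧ Separates G ↑S s t ∧ S.card = n}

/-- Upper edge-connectivity `λ⁺(G)`: maximum of `λ(s,t)` over distinct pairs. -/
noncomputable def lamPlus (G : SimpleGraph V) : ℕ :=
  sSup {n | ∃ s t : V, s ≠ t ∧ lamST G s t = n}

/-- Edge-connectivity `λ(G)`: minimum size of an edge set whose deletion disconnects `G`. -/
noncomputable def edgeConn (G : SimpleGraph V) : ℕ :=
  sInf {n | ∃ S : Finset (Sym2 V), ↑S ⊆ G.edgeSet ∧ ¬ (G.deleteEdges ↑S).Connected ∧ S.card = n}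

/-- `G` is `k`-edge-connected: every disconnecting edge set has at least `k` edges. -/
def EdgeConnected (G : SimpleGraph V) (k : ℕ) : Prop :=
  ∀ S : Finset (Sym2 V), ↑S ⊆ G.edgeSet → ¬ (G.deleteEdges ↑S).Connected → k ≤ S.card

/-- `c` is a rainbow disconnection coloring of `G`: every pair of distinct vertices is
separated by an edge-cut whose edges receive pairwise distinct colors. -/
def IsRDColoring {α : Type*} (G : SimpleGraph V) (c : Sym2 V → α) : Prop :=
  ∀ s t : V, s ≠ t → ∃ S : Finset (Sym2 V), ↑S ⊆ G.edgeSet ∧ Set.InjOn c ↑S ∧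
    Separates G ↑S s t

/-- The rainbow disconnection number `rd(G)`: minimum number of colors in a rainbow
disconnection coloring of `G`. -/
noncomputable def rd (G : SimpleGraph V) : ℕ :=
  sInf {k | ∃ c : Sym2 V → ℕ, (∀ e ∈ G.edgeSet, c e < k) ∧ IsRDColoring G c}

/-- `c` is a proper edge-coloring of `G`: distinct edges sharing a vertex get distinct colors. -/
def IsProperEdgeColoring {α : Type*} (G : SimpleGraph V) (c : Sym2 V → α) : Prop :=
  ∀ e ∈ G.edgeSet, ∀ f ∈ G.edgeSet, e ≠ f → (∃ v : V, v ∈ e ∧ v ∈ f) → c e ≠ c f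

/-- The chromatic index `χ'(G)`: minimum number of colors in a proper edge-coloring. -/
noncomputable def chromIndex (G : SimpleGraph V) : ℕ :=
  sInf {k | ∃ c : Sym2 V → ℕ, (∀ e ∈ G.edgeSet, c e < k) ∧ IsProperEdgeColoring G c}

section VizingInfra
open SimpleGraph
attribute [local instance] Classical.propDecidable
set_option maxHeartbeats 1000000

lemma ncard_edgeSet {W : Type*} (H : SimpleGraph W) [Fintype H.edgeSet] :
    H.edgeSet.ncard = H.edgeFinset.card := by
  rw [SimpleGraph.edgeFinset, Set.ncard_eq_toFinset_card']

lemma reachable_mono_adj {W : Type*} {G G' : SimpleGraph W}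
    (h : ∀ a b, G.Adj a b → G'.Reachable a b) : ∀ {a b : W}, G.Reachable a b → G'.Reachable a b := by
  intro a b hr
  obtain ⟨p⟩ := hr
  induction p with
  | nil => exact Reachable.refl _
  | cons ha _ ih => exact (h _ _ ha).trans ih

lemma conn_bound {W : Type*} [Fintype W] (H : SimpleGraph W)
    (hc : H.Connected) : Fintype.card W ≤ H.edgeSet.ncard + 1 := by
  classical
  generalize hn : H.edgeSet.ncard = n
  induction n using Nat.strong_induction_on generalizing H with
  | _ n ih =>
  by_cases ha : H.IsAcyclic
  · have ht : H.IsTree := ⟨hc, ha⟩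
    have h2 := ht.card_edgeFinset
    rw [ncard_edgeSet] at hn
    omega
  · rw [isAcyclic_iff_forall_edge_isBridge] at ha
    push_neg at ha
    obtain ⟨e, he, hnb⟩ := ha
    induction e with
    | h v w =>
    rw [mem_edgeSet] at he
    have hr : (H \ fromEdgeSet {s(v, w)}).Reachable v w := by
      rw [isBridge_iff] at hnb
      by_contra hr
      exact hnb hr
    set H' := H \ fromEdgeSet {s(v, w)} with hH'
    have hc' : H'.Connected := by
      rw [connected_iff] at hc ⊢
      refine ⟨?_, hc.2⟩
      intro a b
      refine reachable_mono_adj ?_ (hc.1 a b)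
      intro a b hab
      by_cases heq : s(a, b) = s(v, w)
      · rw [Sym2.eq_iff] at heq
        rcases heq with ⟨rfl, rfl⟩ | ⟨rfl, rfl⟩
        · exact hr
        · exact hr.symm
      · refine Adj.reachable ?_
        rw [hH', sdiff_adj, fromEdgeSet_adj]
        exact ⟨hab, fun hh => heq (Set.mem_singleton_iff.mp hh.1)⟩
    have hfe : H'.edgeFinset = H.edgeFinset.erase s(v, w) := by
      ext f
      simp only [mem_edgeFinset, Finset.mem_erase, hH', edgeSet_sdiff, edgeSet_fromEdgeSet,
        edgeSet_sdiff_sdiff_isDiag, Set.mem_diff, Set.mem_singleton_iff]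
      tauto
    rw [ncard_edgeSet] at hn
    have hcard : H'.edgeSet.ncard = n - 1 := by
      rw [ncard_edgeSet, hfe, Finset.card_erase_of_mem (mem_edgeFinset.mpr (H.mem_edgeSet.mpr he)), hn]
    have hn1 : 1 ≤ n := by
      rw [← hn]
      exact Finset.card_pos.mpr ⟨s(v, w), mem_edgeFinset.mpr (H.mem_edgeSet.mpr he)⟩
    have := ih (n - 1) (by omega) H' hc' hcard
    omega

lemma three_free {W : Type*} [Fintype W] [DecidableEq W] (H : SimpleGraph W)
    (hdeg3 : ∀ w u1 u2 u3, H.Adj w u1 → H.Adj w u2 → H.Adj w u3 → u1 = u2 ∨ u1 = u3 ∨ u2 = u3)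
    {x u v : W} (hxu : x ≠ u) (hxv : x ≠ v) (huv : u ≠ v)
    (hx1 : ∀ u1 u2, H.Adj x u1 → H.Adj x u2 → u1 = u2)
    (hu1 : ∀ u1 u2, H.Adj u u1 → H.Adj u u2 → u1 = u2)
    (hv1 : ∀ u1 u2, H.Adj v u1 → H.Adj v u2 → u1 = u2)
    (hru : H.Reachable x u) (hrv : H.Reachable x v) : False := by
  classical
  haveI : DecidableRel H.Adj := Classical.decRel _
  have hdeg : ∀ w, H.degree w ≤ 2 := by
    intro w
    by_contra hgt
    rw [not_le, ← SimpleGraph.card_neighborFinset_eq_degree] at hgt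
    obtain ⟨a, ha, b, hb, c, hcm, hab, hac, hbc⟩ := Finset.two_lt_card.mp hgt
    rw [SimpleGraph.mem_neighborFinset] at ha hb hcm
    rcases hdeg3 w a b c ha hb hcm with h | h | h
    · exact hab h
    · exact hac h
    · exact hbc h
  have hdle1 : ∀ w : W, (∀ u1 u2, H.Adj w u1 → H.Adj w u2 → u1 = u2) → H.degree w ≤ 1 := by
    intro w hw
    by_contra hgt
    rw [not_le, ← SimpleGraph.card_neighborFinset_eq_degree] at hgt
    obtain ⟨a, ha, b, hb, hab⟩ := Finset.one_lt_card.mp hgt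
    rw [SimpleGraph.mem_neighborFinset] at ha hb
    exact hab (hw a b ha hb)
  have hx := hdle1 x hx1
  have hu := hdle1 u hu1
  have hv := hdle1 v hv1
  set R : Finset W := Finset.univ.filter (fun w => H.Reachable x w) with hRdef
  have hmemR : ∀ w : W, w ∈ R ↔ H.Reachable x w := by
    intro w; simp [hRdef]
  haveI : DecidableRel (H.induce (↑R : Set W)).Adj := Classical.decRel _
  have hconn : (H.induce (↑R : Set W)).Connected := by
    apply induce_connected_of_patches x ((hmemR x).mpr (Reachable.refl x))
    intro w hw
    obtain ⟨p⟩ := (hmemR w).mp hw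
    refine ⟨{a | a ∈ p.support}, ?_, p.start_mem_support, p.end_mem_support, ?_⟩
    · intro a hax
      exact (hmemR a).mpr ⟨p.takeUntil a hax⟩
    · exact p.connected_induce_support ⟨x, p.start_mem_support⟩ ⟨w, p.end_mem_support⟩
  set m := (H.induce (↑R : Set W)).edgeSet.ncard with hm
  have h1 : R.card ≤ m + 1 := by
    have := conn_bound _ hconn
    simpa [hm] using this
  have h2 : ∑ a : ↥(↑R : Set W), (H.induce (↑R : Set W)).degree a = 2 * m := by
    rw [hm, ncard_edgeSet]
    exact SimpleGraph.sum_degrees_eq_twice_card_edges _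
  have hdle : ∀ a : ↥(↑R : Set W), (H.induce (↑R : Set W)).degree a ≤ H.degree ↑a := by
    intro a
    rw [← SimpleGraph.card_neighborFinset_eq_degree, ← SimpleGraph.card_neighborFinset_eq_degree]
    apply Finset.card_le_card_of_injOn (fun b => ↑b)
    · intro b hb
      rw [Finset.mem_coe, SimpleGraph.mem_neighborFinset] at hb ⊢
      exact hb
    · intro a _ b _ hab
      exact Subtype.ext hab
  have hsum1 : 2 * m ≤ ∑ a ∈ R, H.degree a := by
    rw [← h2, ← Finset.sum_coe_sort R (fun a => H.degree a)]
    exact Finset.sum_le_sum (fun a _ => hdle a)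
  set S : Finset W := {x, u, v} with hS
  have hSsub : S ⊆ R := by
    intro w hw
    rw [hS] at hw
    simp only [Finset.mem_insert, Finset.mem_singleton] at hw
    rcases hw with rfl | rfl | rfl
    · exact (hmemR w).mpr (Reachable.refl w)
    · exact (hmemR w).mpr hru
    · exact (hmemR w).mpr hrv
  have hScard : S.card = 3 := by
    rw [hS]
    rw [Finset.card_insert_of_notMem (by simp [hxu, hxv]),
      Finset.card_insert_of_notMem (by simp [huv]), Finset.card_singleton]
  have hsum2 : ∑ a ∈ S, H.degree a ≤ 3 := by
    rw [hS, Finset.sum_insert (by simp [hxu, hxv]), Finset.sum_insert (by simp [huv]),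
      Finset.sum_singleton]
    omega
  have hsum3 : ∑ a ∈ R \ S, H.degree a ≤ 2 * (R.card - 3) := by
    calc ∑ a ∈ R \ S, H.degree a ≤ ∑ _a ∈ R \ S, 2 := Finset.sum_le_sum (fun a _ => hdeg a)
    _ = 2 * (R.card - 3) := by
        rw [Finset.sum_const, Finset.card_sdiff_of_subset hSsub, hScard, smul_eq_mul, Nat.mul_comm]
  have hsplit : ∑ a ∈ R \ S, H.degree a + ∑ a ∈ S, H.degree a = ∑ a ∈ R, H.degree a :=
    Finset.sum_sdiff hSsub
  have hc3 : 3 ≤ R.card := hScard ▸ Finset.card_le_card hSsub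
  omega

variable {V : Type*} [Fintype V] [DecidableEq V]

/-- properness of a coloring on a set of edges -/
def PProper (E₀ : Finset (Sym2 V)) (c : Sym2 V → ℕ) : Prop :=
  ∀ e ∈ E₀, ∀ f ∈ E₀, e ≠ f → (∃ v : V, v ∈ e ∧ v ∈ f) → c e ≠ c f

/-- colors present at a vertex -/
def colorsAt (E₀ : Finset (Sym2 V)) (c : Sym2 V → ℕ) (v : V) : Finset ℕ :=
  (E₀.filter (fun e => v ∈ e)).image c

lemma mem_colorsAt {E₀ : Finset (Sym2 V)} {c : Sym2 V → ℕ} {v : V} {a : ℕ} :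
    a ∈ colorsAt E₀ c v ↔ ∃ e ∈ E₀, v ∈ e ∧ c e = a := by
  simp only [colorsAt, Finset.mem_image, Finset.mem_filter]
  tauto

/-- the graph of edges colored α or β -/
def kgraph (E₀ : Finset (Sym2 V)) (c : Sym2 V → ℕ) (α β : ℕ) : SimpleGraph V :=
  SimpleGraph.fromEdgeSet {e | e ∈ E₀ ∧ (c e = α ∨ c e = β)}

/-- swap α and β on the kempe component of u -/
noncomputable def kswap (E₀ : Finset (Sym2 V)) (c : Sym2 V → ℕ) (α β : ℕ) (u : V) :
    Sym2 V → ℕ :=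
  fun e => if e ∈ E₀ ∧ (c e = α ∨ c e = β) ∧ ∃ a ∈ e, (kgraph E₀ c α β).Reachable u a
    then (if c e = α then β else α) else c e

section Kempe
variable {E₀ : Finset (Sym2 V)} {c : Sym2 V → ℕ} {α β : ℕ} {u : V}

lemma kgraph_adj {e : Sym2 V} {a b : V} (he : e ∈ E₀) (hd : ¬e.IsDiag)
    (hcol : c e = α ∨ c e = β) (hab : e = s(a, b)) : (kgraph E₀ c α β).Adj a b := by
  rw [kgraph, fromEdgeSet_adj]
  subst hab
  exact ⟨⟨he, hcol⟩, fun h => hd (by simp [h])⟩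

lemma reach_all (hdiag : ∀ e ∈ E₀, ¬e.IsDiag) {e : Sym2 V} (he : e ∈ E₀)
    (hcol : c e = α ∨ c e = β) {a w : V} (ha : a ∈ e) (hw : w ∈ e)
    (hr : (kgraph E₀ c α β).Reachable u a) : (kgraph E₀ c α β).Reachable u w := by
  induction e with
  | h p q =>
    have hadj : (kgraph E₀ c α β).Adj p q := kgraph_adj he (hdiag _ he) hcol rfl
    rw [Sym2.mem_iff] at ha hw
    rcases ha with rfl | rfl <;> rcases hw with rfl | rfl
    · exact hr
    · exact hr.trans hadj.reachable
    · exact hr.trans hadj.symm.reachable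
    · exact hr

lemma kswap_proper (hdiag : ∀ e ∈ E₀, ¬e.IsDiag) (hc : PProper E₀ c) :
    PProper E₀ (kswap E₀ c α β u) := by
  by_cases hαβ : α = β
  · have : kswap E₀ c α β u = c := by
      funext e
      simp only [kswap]
      split_ifs with h1 h2
      · rw [h2, hαβ]
      · rcases h1.2.1 with h | h
        · exact absurd h h2
        · rw [h, hαβ]
      · rfl
    rw [this]; exact hc
  intro e he f hf hef hshare heq
  obtain ⟨v, hve, hvf⟩ := hshare
  by_cases he' : e ∈ E₀ ∧ (c e = α ∨ c e = β) ∧ ∃ a ∈ e, (kgraph E₀ c α β).Reachable u a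
    <;> by_cases hf' : f ∈ E₀ ∧ (c f = α ∨ c f = β) ∧ ∃ a ∈ f, (kgraph E₀ c α β).Reachable u a
  · simp only [kswap] at heq
    rw [if_pos he', if_pos hf'] at heq
    have : c e = c f := by
      rcases he'.2.1 with h1 | h1 <;> rcases hf'.2.1 with h2 | h2
      · rw [h1, h2]
      · rw [if_pos h1, if_neg (by rw [h2]; exact fun h => hαβ h.symm)] at heq
        exact absurd heq (fun h => hαβ h.symm)
      · rw [if_neg (by rw [h1]; exact fun h => hαβ h.symm), if_pos h2] at heq
        exact absurd heq hαβ
      · rw [h1, h2]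
    exact hc e he f hf hef ⟨v, hve, hvf⟩ this
  · -- e swapped, f not
    simp only [kswap] at heq
    rw [if_pos he', if_neg hf'] at heq
    have hcf : c f = α ∨ c f = β := by
      rcases he'.2.1 with h1 | h1
      · rw [if_pos h1] at heq; exact Or.inr heq.symm
      · rw [if_neg (by rw [h1]; exact fun h => hαβ h.symm)] at heq; exact Or.inl heq.symm
    obtain ⟨a, hae, hra⟩ := he'.2.2
    have hrv : (kgraph E₀ c α β).Reachable u v := reach_all hdiag he he'.2.1 hae hve hra
    exact hf' ⟨hf, hcf, v, hvf, hrv⟩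
  · -- f swapped, e not
    simp only [kswap] at heq
    rw [if_neg he', if_pos hf'] at heq
    have hce : c e = α ∨ c e = β := by
      rcases hf'.2.1 with h1 | h1
      · rw [if_pos h1] at heq; exact Or.inr heq
      · rw [if_neg (by rw [h1]; exact fun h => hαβ h.symm)] at heq; exact Or.inl heq
    obtain ⟨a, haf, hra⟩ := hf'.2.2
    have hrv : (kgraph E₀ c α β).Reachable u v := reach_all hdiag hf hf'.2.1 haf hvf hra
    exact he' ⟨he, hce, v, hve, hrv⟩
  · simp only [kswap] at heq
    rw [if_neg he', if_neg hf'] at heq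
    exact hc e he f hf hef ⟨v, hve, hvf⟩ heq

lemma colorsAt_kswap_of_not_reach (hdiag : ∀ e ∈ E₀, ¬e.IsDiag) {v : V}
    (hv : ¬(kgraph E₀ c α β).Reachable u v) :
    colorsAt E₀ (kswap E₀ c α β u) v = colorsAt E₀ c v := by
  unfold colorsAt
  apply Finset.image_congr
  intro e he
  rw [Finset.coe_filter, Set.mem_setOf_eq] at he
  simp only [kswap]
  rw [if_neg]
  rintro ⟨h1, h2, a, hae, hra⟩
  exact hv (reach_all hdiag h1 h2 hae he.2 hra)

lemma kswap_free (hα : α ∉ colorsAt E₀ c u) :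
    β ∉ colorsAt E₀ (kswap E₀ c α β u) u := by
  intro hβ
  rw [mem_colorsAt] at hβ
  obtain ⟨e, he, hue, heq⟩ := hβ
  by_cases he' : e ∈ E₀ ∧ (c e = α ∨ c e = β) ∧ ∃ a ∈ e, (kgraph E₀ c α β).Reachable u a
  · simp only [kswap] at heq
    rw [if_pos he'] at heq
    rcases he'.2.1 with h1 | h1
    · exact hα (mem_colorsAt.mpr ⟨e, he, hue, h1⟩)
    · by_cases hαβ : α = β
      · exact hα (mem_colorsAt.mpr ⟨e, he, hue, h1.trans hαβ.symm⟩)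
      · rw [if_neg (h1 ▸ fun h => hαβ h.symm)] at heq
        exact hαβ heq
  · simp only [kswap] at heq
    rw [if_neg he'] at heq
    exact he' ⟨he, Or.inr heq, u, hue, Reachable.refl u⟩

lemma kswap_bdd {D : ℕ} (hb : ∀ e ∈ E₀, c e < D + 1) (hα : α < D + 1) (hβ : β < D + 1) :
    ∀ e ∈ E₀, kswap E₀ c α β u e < D + 1 := by
  intro e he
  simp only [kswap]
  split_ifs
  · exact hβ
  · exact hα
  · exact hb e he

lemma kgraph_adj_unique (hc : PProper E₀ c) {v : V} (hα : α ∉ colorsAt E₀ c v) :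
    ∀ u1 u2, (kgraph E₀ c α β).Adj v u1 → (kgraph E₀ c α β).Adj v u2 → u1 = u2 := by
  intro u1 u2 h1 h2
  rw [kgraph, SimpleGraph.fromEdgeSet_adj] at h1 h2
  have hcβ : ∀ w, s(v, w) ∈ E₀ → (c s(v, w) = α ∨ c s(v, w) = β) → c s(v, w) = β := by
    intro w hw hcol
    rcases hcol with h | h
    · exact absurd (mem_colorsAt.mpr ⟨_, hw, Sym2.mem_mk_left _ _, h⟩) hα
    · exact h
  by_contra hne
  have hedge : s(v, u1) ≠ s(v, u2) := fun h => hne (Sym2.congr_right.mp h)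
  exact hc _ h1.1.1 _ h2.1.1 hedge ⟨v, Sym2.mem_mk_left _ _, Sym2.mem_mk_left _ _⟩
    ((hcβ u1 h1.1.1 h1.1.2).trans (hcβ u2 h2.1.1 h2.1.2).symm)

lemma kgraph_adj_three (hc : PProper E₀ c) :
    ∀ v u1 u2 u3, (kgraph E₀ c α β).Adj v u1 → (kgraph E₀ c α β).Adj v u2 →
      (kgraph E₀ c α β).Adj v u3 → u1 = u2 ∨ u1 = u3 ∨ u2 = u3 := by
  intro v u1 u2 u3 h1 h2 h3
  by_contra hne
  push_neg at hne
  obtain ⟨h12, h13, h23⟩ := hne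
  rw [kgraph, SimpleGraph.fromEdgeSet_adj] at h1 h2 h3
  have e12 : s(v, u1) ≠ s(v, u2) := fun h => h12 (Sym2.congr_right.mp h)
  have e13 : s(v, u1) ≠ s(v, u3) := fun h => h13 (Sym2.congr_right.mp h)
  have e23 : s(v, u2) ≠ s(v, u3) := fun h => h23 (Sym2.congr_right.mp h)
  have d12 := hc _ h1.1.1 _ h2.1.1 e12 ⟨v, Sym2.mem_mk_left _ _, Sym2.mem_mk_left _ _⟩
  have d13 := hc _ h1.1.1 _ h3.1.1 e13 ⟨v, Sym2.mem_mk_left _ _, Sym2.mem_mk_left _ _⟩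
  have d23 := hc _ h2.1.1 _ h3.1.1 e23 ⟨v, Sym2.mem_mk_left _ _, Sym2.mem_mk_left _ _⟩
  rcases h1.1.2 with ha | ha <;> rcases h2.1.2 with hb | hb <;> rcases h3.1.2 with hcc | hcc <;>
    omega

end Kempe
lemma kgraph_comm {E₀ : Finset (Sym2 V)} {c : Sym2 V → ℕ} {α β : ℕ} :
    kgraph E₀ c α β = kgraph E₀ c β α := by
  unfold kgraph
  congr 1
  ext e
  simp only [Set.mem_setOf_eq]
  tauto

section Fans
variable (G : SimpleGraph V) (E : Finset (Sym2 V)) (x y₀ : V) (c : Sym2 V → ℕ)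

/-- Vizing fan: `f 0, ..., f n` distinct neighbors of `x`, `f 0 = y₀`, and for `i < n`
the edge `x -- f (i+1)` is colored with a color free at `f i`. -/
def FanProp (f : ℕ → V) (n : ℕ) : Prop :=
  f 0 = y₀ ∧ (∀ i ≤ n, ∀ j ≤ n, f i = f j → i = j) ∧ (∀ i ≤ n, G.Adj x (f i)) ∧
    ∀ i < n, s(x, f (i+1)) ∈ E.erase s(x, y₀) ∧
      c s(x, f (i+1)) ∉ colorsAt (E.erase s(x, y₀)) c (f i)

/-- the fan-rotated coloring (shift colors along the fan) -/
noncomputable def rotc (f : ℕ → V) (n : ℕ) : Sym2 V → ℕ :=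
  fun e => if h : ∃ i, i < n ∧ e = s(x, f i) then c s(x, f (Nat.find h + 1)) else c e

variable {G E x y₀ c}
variable {f : ℕ → V} {n : ℕ}

lemma fanprop_mono (hfan : FanProp G E x y₀ c f n) {m : ℕ} (hm : m ≤ n) :
    FanProp G E x y₀ c f m :=
  ⟨hfan.1, fun i hi j hj => hfan.2.1 i (hi.trans hm) j (hj.trans hm),
    fun i hi => hfan.2.2.1 i (hi.trans hm), fun i hi => hfan.2.2.2 i (lt_of_lt_of_le hi hm)⟩

lemma fan_edge_mem (hfan : FanProp G E x y₀ c f n) {i : ℕ} (h1 : 1 ≤ i) (h2 : i ≤ n) :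
    s(x, f i) ∈ E.erase s(x, y₀) := by
  obtain ⟨i', rfl⟩ : ∃ i', i = i' + 1 := ⟨i - 1, by omega⟩
  exact (hfan.2.2.2 i' (by omega)).1

lemma fan_mem_E (hfan : FanProp G E x y₀ c f n) (he₀ : s(x, y₀) ∈ E) {i : ℕ} (h2 : i ≤ n) :
    s(x, f i) ∈ E := by
  rcases Nat.eq_zero_or_pos i with rfl | h1
  · rw [hfan.1]; exact he₀
  · exact Finset.mem_of_mem_erase (fan_edge_mem hfan h1 h2)

lemma rotc_fan (hfan : FanProp G E x y₀ c f n) {i : ℕ} (hi : i < n) :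
    rotc x c f n (s(x, f i)) = c s(x, f (i + 1)) := by
  have h : ∃ j, j < n ∧ s(x, f i) = s(x, f j) := ⟨i, hi, rfl⟩
  simp only [rotc]
  rw [dif_pos h]
  have hspec := Nat.find_spec h
  have : i = Nat.find h :=
    hfan.2.1 i (le_of_lt hi) (Nat.find h) (le_of_lt hspec.1) (Sym2.congr_right.mp hspec.2)
  rw [← this]

lemma rotc_not_fan {e : Sym2 V} (h : ¬∃ i, i < n ∧ e = s(x, f i)) :
    rotc x c f n e = c e := by
  simp only [rotc]
  rw [dif_neg h]

lemma mem_erase_of_not_fan (hfan : FanProp G E x y₀ c f n) {e : Sym2 V}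
    (he : e ∈ E.erase s(x, f n)) (h : ¬∃ i, i < n ∧ e = s(x, f i)) :
    e ∈ E.erase s(x, y₀) := by
  refine Finset.mem_erase.mpr ⟨?_, Finset.mem_of_mem_erase he⟩
  intro heq
  rcases Nat.eq_zero_or_pos n with rfl | hn
  · exact Finset.ne_of_mem_erase he (by rw [heq, hfan.1])
  · exact h ⟨0, hn, by rw [heq, hfan.1]⟩

lemma rot_proper (hfan : FanProp G E x y₀ c f n)
    (hadjx : ∀ i ≤ n, x ≠ f i)
    (hc : PProper (E.erase s(x, y₀)) c) :
    PProper (E.erase s(x, f n)) (rotc x c f n) := by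
  intro e he g hg hef hsh heq
  obtain ⟨v, hve, hvg⟩ := hsh
  by_cases he' : ∃ i, i < n ∧ e = s(x, f i) <;> by_cases hg' : ∃ i, i < n ∧ g = s(x, f i)
  · obtain ⟨i, hi, rfl⟩ := he'
    obtain ⟨i', hi', rfl⟩ := hg'
    rw [rotc_fan hfan hi, rotc_fan hfan hi'] at heq
    have hne : s(x, f (i+1)) ≠ s(x, f (i'+1)) := by
      intro hh
      have h2 : i + 1 = i' + 1 := hfan.2.1 (i+1) (by omega) (i'+1) (by omega)
        (Sym2.congr_right.mp hh)
      have h3 : i = i' := by omega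
      exact hef (by rw [h3])
    exact hc _ (fan_edge_mem hfan (by omega) (by omega)) _
      (fan_edge_mem hfan (by omega) (by omega)) hne ⟨x, by simp, by simp⟩ heq
  · obtain ⟨i, hi, rfl⟩ := he'
    have hgE₀ : g ∈ E.erase s(x, y₀) := mem_erase_of_not_fan hfan hg hg'
    rw [rotc_fan hfan hi, rotc_not_fan hg'] at heq
    rw [Sym2.mem_iff] at hve
    rcases hve with h | h
    · rw [h] at hvg
      have hne : g ≠ s(x, f (i+1)) := by
        intro hh
        rcases Nat.lt_or_ge (i+1) n with hlt | hge
        · exact hg' ⟨i+1, hlt, hh⟩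
        · have : i + 1 = n := by omega
          exact Finset.ne_of_mem_erase hg (by rw [hh, this])
      exact hc _ (fan_edge_mem hfan (by omega) (by omega)) g hgE₀ (Ne.symm hne)
        ⟨x, by simp, hvg⟩ heq
    · rw [h] at hvg
      exact (hfan.2.2.2 i hi).2 (mem_colorsAt.mpr ⟨g, hgE₀, hvg, heq.symm⟩)
  · obtain ⟨i, hi, rfl⟩ := hg'
    have heE₀ : e ∈ E.erase s(x, y₀) := mem_erase_of_not_fan hfan he he'
    rw [rotc_fan hfan hi, rotc_not_fan he'] at heq
    rw [Sym2.mem_iff] at hvg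
    rcases hvg with h | h
    · rw [h] at hve
      have hne : e ≠ s(x, f (i+1)) := by
        intro hh
        rcases Nat.lt_or_ge (i+1) n with hlt | hge
        · exact he' ⟨i+1, hlt, hh⟩
        · have : i + 1 = n := by omega
          exact Finset.ne_of_mem_erase he (by rw [hh, this])
      exact hc e heE₀ _ (fan_edge_mem hfan (by omega) (by omega)) hne
        ⟨x, hve, by simp⟩ heq
    · rw [h] at hve
      exact (hfan.2.2.2 i hi).2 (mem_colorsAt.mpr ⟨e, heE₀, hve, heq⟩)
  · rw [rotc_not_fan he', rotc_not_fan hg'] at heq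
    exact hc e (mem_erase_of_not_fan hfan he he') g (mem_erase_of_not_fan hfan hg hg')
      hef ⟨v, hve, hvg⟩ heq

lemma rot_colorsAt_x (hfan : FanProp G E x y₀ c f n) :
    colorsAt (E.erase s(x, f n)) (rotc x c f n) x ⊆ colorsAt (E.erase s(x, y₀)) c x := by
  intro a ha
  rw [mem_colorsAt] at ha ⊢
  obtain ⟨e, he, hxe, heq⟩ := ha
  by_cases he' : ∃ i, i < n ∧ e = s(x, f i)
  · obtain ⟨i, hi, rfl⟩ := he'
    rw [rotc_fan hfan hi] at heq
    exact ⟨s(x, f (i+1)), fan_edge_mem hfan (by omega) (by omega), by simp, heq⟩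
  · rw [rotc_not_fan he'] at heq
    exact ⟨e, mem_erase_of_not_fan hfan he he', hxe, heq⟩

lemma rot_colorsAt_last (hfan : FanProp G E x y₀ c f n) (hadjx : ∀ i ≤ n, x ≠ f i) :
    colorsAt (E.erase s(x, f n)) (rotc x c f n) (f n) ⊆
      colorsAt (E.erase s(x, y₀)) c (f n) := by
  intro a ha
  rw [mem_colorsAt] at ha ⊢
  obtain ⟨e, he, hxe, heq⟩ := ha
  have he' : ¬∃ i, i < n ∧ e = s(x, f i) := by
    rintro ⟨i, hi, rfl⟩
    rw [Sym2.mem_iff] at hxe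
    rcases hxe with h | h
    · exact hadjx n le_rfl h.symm
    · have := hfan.2.1 n le_rfl i (by omega) h
      omega
  rw [rotc_not_fan he'] at heq
  exact ⟨e, mem_erase_of_not_fan hfan he he', hxe, heq⟩

lemma rot_bdd {D : ℕ} (hfan : FanProp G E x y₀ c f n)
    (hb : ∀ e ∈ E.erase s(x, y₀), c e < D + 1) :
    ∀ e ∈ E.erase s(x, f n), rotc x c f n e < D + 1 := by
  intro e he
  by_cases he' : ∃ i, i < n ∧ e = s(x, f i)
  · obtain ⟨i, hi, rfl⟩ := he'
    rw [rotc_fan hfan hi]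
    exact hb _ (fan_edge_mem hfan (by omega) (by omega))
  · rw [rotc_not_fan he']
    exact hb e (mem_erase_of_not_fan hfan he he')

end Fans
end VizingInfra
section VizingMain
open SimpleGraph
attribute [local instance] Classical.propDecidable
set_option maxHeartbeats 2000000
variable {V : Type*} [Fintype V] [DecidableEq V]

theorem extend_coloring (G : SimpleGraph V) [DecidableRel G.Adj] (D : ℕ)
    (hdeg : ∀ v, G.degree v ≤ D) (E : Finset (Sym2 V)) (hE : ↑E ⊆ G.edgeSet)
    (x y₀ : V) (he₀ : s(x, y₀) ∈ E) (c : Sym2 V → ℕ)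
    (hc : PProper (E.erase s(x, y₀)) c) (hb : ∀ e ∈ E.erase s(x, y₀), c e < D + 1) :
    ∃ c' : Sym2 V → ℕ, PProper E c' ∧ ∀ e ∈ E, c' e < D + 1 := by
  classical
  set E₀ := E.erase s(x, y₀) with hE₀def
  have hEsub : ∀ e ∈ E, e ∈ G.edgeSet := fun e he => hE he
  have hE₀sub : ∀ e ∈ E₀, e ∈ G.edgeSet := fun e he => hEsub e (Finset.mem_of_mem_erase he)
  have hdiagE : ∀ e ∈ E, ¬e.IsDiag := fun e he => G.not_isDiag_of_mem_edgeSet (hEsub e he)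
  have hdiagErase : ∀ (g : Sym2 V), ∀ e ∈ E.erase g, ¬e.IsDiag :=
    fun g e he => hdiagE e (Finset.mem_of_mem_erase he)
  have hxy : G.Adj x y₀ := (G.mem_edgeSet).mp (hEsub _ he₀)
  -- free colors exist
  have hfree : ∀ v : V, ∃ a, a < D + 1 ∧ a ∉ colorsAt E₀ c v := by
    intro v
    by_contra hcon
    push_neg at hcon
    have hsub : Finset.range (D + 1) ⊆ colorsAt E₀ c v :=
      fun a ha => hcon a (Finset.mem_range.mp ha)
    have h1 : D + 1 ≤ (colorsAt E₀ c v).card := by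
      simpa using Finset.card_le_card hsub
    have h2 : (colorsAt E₀ c v).card ≤ D := by
      calc (colorsAt E₀ c v).card ≤ (E₀.filter (fun e => v ∈ e)).card := Finset.card_image_le
        _ ≤ (G.incidenceFinset v).card := by
            apply Finset.card_le_card
            intro e he
            rw [Finset.mem_filter] at he
            rw [mem_incidenceFinset]
            exact ⟨hE₀sub e he.1, he.2⟩
        _ = G.degree v := G.card_incidenceFinset_eq_degree v
        _ ≤ D := hdeg v
    omega
  -- the finishing move: color the missing edge
  have hfinish : ∀ (w : V) (c₁ : Sym2 V → ℕ), s(x, w) ∈ E →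
      PProper (E.erase s(x, w)) c₁ → (∀ e ∈ E.erase s(x, w), c₁ e < D + 1) →
      ∀ γ, γ < D + 1 → γ ∉ colorsAt (E.erase s(x, w)) c₁ x →
      γ ∉ colorsAt (E.erase s(x, w)) c₁ w →
      ∃ c' : Sym2 V → ℕ, PProper E c' ∧ ∀ e ∈ E, c' e < D + 1 := by
    intro w c₁ hw hp hbd γ hγ hγx hγw
    refine ⟨Function.update c₁ s(x, w) γ, ?_, ?_⟩
    · intro e he g hg hef hsh heq
      obtain ⟨v, hve, hvg⟩ := hsh
      by_cases hesw : e = s(x, w) <;> by_cases hgsw : g = s(x, w)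
      · exact hef (hesw.trans hgsw.symm)
      · subst hesw
        rw [Function.update_self, Function.update_of_ne hgsw] at heq
        have hgmem : g ∈ E.erase s(x, w) := Finset.mem_erase.mpr ⟨hgsw, hg⟩
        rw [Sym2.mem_iff] at hve
        rcases hve with h | h
        · rw [h] at hvg
          exact hγx (mem_colorsAt.mpr ⟨g, hgmem, hvg, heq.symm⟩)
        · rw [h] at hvg
          exact hγw (mem_colorsAt.mpr ⟨g, hgmem, hvg, heq.symm⟩)
      · subst hgsw
        rw [Function.update_self, Function.update_of_ne hesw] at heq
        have hemem : e ∈ E.erase s(x, w) := Finset.mem_erase.mpr ⟨hesw, he⟩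
        rw [Sym2.mem_iff] at hvg
        rcases hvg with h | h
        · rw [h] at hve
          exact hγx (mem_colorsAt.mpr ⟨e, hemem, hve, heq⟩)
        · rw [h] at hve
          exact hγw (mem_colorsAt.mpr ⟨e, hemem, hve, heq⟩)
      · rw [Function.update_of_ne hesw, Function.update_of_ne hgsw] at heq
        exact hp e (Finset.mem_erase.mpr ⟨hesw, he⟩) g (Finset.mem_erase.mpr ⟨hgsw, hg⟩)
          hef ⟨v, hve, hvg⟩ heq
    · intro e he
      by_cases hesw : e = s(x, w)
      · rw [hesw, Function.update_self]; exact hγ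
      · rw [Function.update_of_ne hesw]
        exact hbd e (Finset.mem_erase.mpr ⟨hesw, he⟩)
  -- maximal fan
  set N : Set ℕ := {m | ∃ f : ℕ → V, FanProp G E x y₀ c f m} with hNdef
  have hN0 : 0 ∈ N := by
    refine ⟨fun _ => y₀, rfl, ?_, ?_, ?_⟩
    · intro i hi j hj _; omega
    · intro i _; exact hxy
    · intro i hi; exact absurd hi (by omega)
  have hNbdd : BddAbove N := by
    refine ⟨Fintype.card V, ?_⟩
    rintro m ⟨f, hf⟩
    have hinj : Function.Injective (fun i : Fin (m + 1) => f i) := by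
      intro i j hij
      exact Fin.ext (hf.2.1 i (by omega) j (by omega) hij)
    have := Fintype.card_le_of_injective _ hinj
    simp only [Fintype.card_fin] at this
    omega
  obtain ⟨f, hfan⟩ : sSup N ∈ N := Nat.sSup_mem ⟨0, hN0⟩ hNbdd
  set n := sSup N with hndef
  have hmax : ∀ m ∈ N, m ≤ n := fun m hm => le_csSup hNbdd hm
  have hadjx : ∀ i ≤ n, x ≠ f i := fun i hi => (hfan.2.2.1 i hi).ne
  have hmemE : ∀ m ≤ n, s(x, f m) ∈ E := fun m hm => fan_mem_E hfan he₀ hm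
  obtain ⟨β, hβlt, hβz⟩ := hfree (f n)
  obtain ⟨α, hαlt, hαx⟩ := hfree x
  by_cases hβx : β ∉ colorsAt E₀ c x
  · -- case (i): β is free at both x and f n: rotate the whole fan and color
    exact hfinish (f n) (rotc x c f n) (hmemE n le_rfl) (rot_proper hfan hadjx hc)
      (rot_bdd hfan hb) β hβlt (fun h => hβx (rot_colorsAt_x hfan h))
      (fun h => hβz (rot_colorsAt_last hfan hadjx h))
  · rw [not_not] at hβx
    rw [mem_colorsAt] at hβx
    obtain ⟨g, hg₀, hxg, hgβ⟩ := hβx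
    obtain ⟨w, rfl⟩ : ∃ w, g = s(x, w) := Sym2.mem_iff_exists.mp hxg
    have hadjw : G.Adj x w := (G.mem_edgeSet).mp (hE₀sub _ hg₀)
    -- w must be on the fan, else the fan extends
    have hwfan : ∃ j, j ≤ n ∧ w = f j := by
      by_contra hcon
      push_neg at hcon
      have hext : FanProp G E x y₀ c (Function.update f (n + 1) w) (n + 1) := by
        refine ⟨?_, ?_, ?_, ?_⟩
        · rw [Function.update_of_ne (by omega : (0 : ℕ) ≠ n + 1)]; exact hfan.1
        · intro i hi j hj hij
          by_cases hi' : i = n + 1 <;> by_cases hj' : j = n + 1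
          · rw [hi', hj']
          · subst hi'
            rw [Function.update_self, Function.update_of_ne hj'] at hij
            exact absurd hij (hcon j (by omega))
          · subst hj'
            rw [Function.update_of_ne hi', Function.update_self] at hij
            exact absurd hij.symm (hcon i (by omega))
          · rw [Function.update_of_ne hi', Function.update_of_ne hj'] at hij
            exact hfan.2.1 i (by omega) j (by omega) hij
        · intro i hi
          by_cases hi' : i = n + 1
          · subst hi'; rw [Function.update_self]; exact hadjw
          · rw [Function.update_of_ne hi']; exact hfan.2.2.1 i (by omega)
        · intro i hi
          by_cases hi' : i = n
          · rw [hi', Function.update_self, Function.update_of_ne (by omega : n ≠ n + 1)]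
            exact ⟨hg₀, fun h => hβz (by rwa [hgβ] at h)⟩
          · rw [Function.update_of_ne (by omega : i + 1 ≠ n + 1),
              Function.update_of_ne (by omega : i ≠ n + 1)]
            exact hfan.2.2.2 i (by omega)
      have := hmax (n + 1) ⟨_, hext⟩
      omega
    obtain ⟨j, hjn, rfl⟩ := hwfan
    have hj1 : 1 ≤ j := by
      rcases Nat.eq_zero_or_pos j with rfl | h
      · exact absurd (by rw [hfan.1]) (Finset.ne_of_mem_erase hg₀)
      · exact h
    have hjn2 : j ≠ n := by
      intro h
      exact hβz (mem_colorsAt.mpr ⟨s(x, f j), hg₀, by rw [h]; exact Sym2.mem_mk_right _ _, hgβ⟩)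
    obtain ⟨j', rfl⟩ : ∃ j', j = j' + 1 := ⟨j - 1, by omega⟩
    have hβfree_j' : β ∉ colorsAt E₀ c (f j') := by
      have := (hfan.2.2.2 j' (by omega)).2
      rwa [hgβ] at this
    set H := kgraph E₀ c α β with hHdef
    have hdiag₀ : ∀ e ∈ E₀, ¬e.IsDiag := hdiagErase _
    have hdeg2 : ∀ w u1 u2 u3, H.Adj w u1 → H.Adj w u2 → H.Adj w u3 →
        u1 = u2 ∨ u1 = u3 ∨ u2 = u3 := kgraph_adj_three hc
    have hdx : ∀ u1 u2, H.Adj x u1 → H.Adj x u2 → u1 = u2 := kgraph_adj_unique hc hαx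
    have hdj : ∀ u1 u2, H.Adj (f j') u1 → H.Adj (f j') u2 → u1 = u2 := by
      intro u1 u2 h1 h2
      rw [hHdef, kgraph_comm] at h1 h2
      exact kgraph_adj_unique hc hβfree_j' u1 u2 h1 h2
    have hdn : ∀ u1 u2, H.Adj (f n) u1 → H.Adj (f n) u2 → u1 = u2 := by
      intro u1 u2 h1 h2
      rw [hHdef, kgraph_comm] at h1 h2
      exact kgraph_adj_unique hc hβz u1 u2 h1 h2
    have hxj : x ≠ f j' := hadjx j' (by omega)
    have hxn : x ≠ f n := hadjx n le_rfl
    have hjn'' : f j' ≠ f n := by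
      intro h
      have := hfan.2.1 j' (by omega) n le_rfl h
      omega
    -- the rotated Kempe graphs map into H (plus possibly the edge x -- f j')
    have hmonoAdj : ∀ m, m ≤ n → ∀ a b : V,
        (kgraph (E.erase s(x, f m)) (rotc x c f m) α β).Adj a b →
        H.Adj a b ∨ (s(a, b) = s(x, f j') ∧ s(a, b) ≠ s(x, f m)) := by
      intro m hm a b hab
      rw [kgraph, SimpleGraph.fromEdgeSet_adj] at hab
      obtain ⟨⟨hmem, hcol⟩, hne⟩ := hab
      have hfanm : FanProp G E x y₀ c f m := fanprop_mono hfan hm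
      by_cases hform : ∃ i, i < m ∧ s(a, b) = s(x, f i)
      · obtain ⟨i, hi, heq2⟩ := hform
        rw [heq2, rotc_fan hfanm hi] at hcol
        have hiE : s(x, f (i + 1)) ∈ E₀ := fan_edge_mem hfan (by omega) (by omega)
        have hij : i = j' := by
          by_contra hij
          rcases hcol with h | h
          · exact hαx (mem_colorsAt.mpr ⟨_, hiE, Sym2.mem_mk_left _ _, h⟩)
          · have hneq : s(x, f (i + 1)) ≠ s(x, f (j' + 1)) := by
              intro hq
              have := hfan.2.1 (i + 1) (by omega) (j' + 1) (by omega) (Sym2.congr_right.mp hq)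
              omega
            exact hc _ hiE _ hg₀ hneq ⟨x, Sym2.mem_mk_left _ _, Sym2.mem_mk_left _ _⟩
              (h.trans hgβ.symm)
        refine Or.inr ⟨by rw [heq2, hij], Finset.ne_of_mem_erase hmem⟩
      · exact Or.inl (by
          rw [hHdef, kgraph, SimpleGraph.fromEdgeSet_adj]
          rw [rotc_not_fan hform] at hcol
          exact ⟨⟨mem_erase_of_not_fan hfanm hmem hform, hcol⟩, hne⟩)
    by_cases hreach : H.Reachable x (f j')
    · -- case (ii-b): rotate the full fan, swap the Kempe component of x, color x -- f n
      have hnr : ¬H.Reachable x (f n) := fun hr =>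
        three_free H hdeg2 hxj hxn hjn'' hdx hdj hdn hreach hr
      have hrm : ∀ a b : V, (kgraph (E.erase s(x, f n)) (rotc x c f n) α β).Adj a b →
          H.Reachable a b := by
        intro a b hab
        rcases hmonoAdj n le_rfl a b hab with h | ⟨h1, _⟩
        · exact h.reachable
        · rcases Sym2.eq_iff.mp h1 with ⟨rfl, rfl⟩ | ⟨rfl, rfl⟩
          · exact hreach
          · exact hreach.symm
      have hnr4 : ¬(kgraph (E.erase s(x, f n)) (rotc x c f n) α β).Reachable x (f n) :=
        fun hr => hnr (reachable_mono_adj hrm hr)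
      refine hfinish (f n) (kswap (E.erase s(x, f n)) (rotc x c f n) α β x)
        (hmemE n le_rfl) ?_ ?_ β hβlt ?_ ?_
      · exact kswap_proper (hdiagErase _) (rot_proper hfan hadjx hc)
      · exact kswap_bdd (rot_bdd hfan hb) hαlt hβlt
      · exact kswap_free (fun h => hαx (rot_colorsAt_x hfan h))
      · rw [colorsAt_kswap_of_not_reach (hdiagErase _) hnr4]
        exact fun h => hβz (rot_colorsAt_last hfan hadjx h)
    · -- case (ii-a): rotate the fan up to j', swap the Kempe component of x, color x -- f j'
      have hfanp : FanProp G E x y₀ c f j' := fanprop_mono hfan (by omega)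
      have hadjxp : ∀ i ≤ j', x ≠ f i := fun i hi => hadjx i (by omega)
      have hrm : ∀ a b : V, (kgraph (E.erase s(x, f j')) (rotc x c f j') α β).Adj a b →
          H.Reachable a b := by
        intro a b hab
        rcases hmonoAdj j' (by omega) a b hab with h | ⟨h1, h2⟩
        · exact h.reachable
        · exact absurd h1 h2
      have hnr' : ¬(kgraph (E.erase s(x, f j')) (rotc x c f j') α β).Reachable x (f j') :=
        fun hr => hreach (reachable_mono_adj hrm hr)
      refine hfinish (f j') (kswap (E.erase s(x, f j')) (rotc x c f j') α β x)
        (hmemE j' (by omega)) ?_ ?_ β hβlt ?_ ?_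
      · exact kswap_proper (hdiagErase _) (rot_proper hfanp hadjxp hc)
      · exact kswap_bdd (rot_bdd hfanp hb) hαlt hβlt
      · exact kswap_free (fun h => hαx (rot_colorsAt_x hfanp h))
      · rw [colorsAt_kswap_of_not_reach (hdiagErase _) hnr']
        exact fun h => hβfree_j' (rot_colorsAt_last hfanp hadjxp h)

theorem color_all (G : SimpleGraph V) [DecidableRel G.Adj] (D : ℕ)
    (hdeg : ∀ v, G.degree v ≤ D) :
    ∀ n (E : Finset (Sym2 V)), E.card ≤ n → ↑E ⊆ G.edgeSet →
      ∃ c : Sym2 V → ℕ, PProper E c ∧ ∀ e ∈ E, c e < D + 1 := by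
  intro n
  induction n with
  | zero =>
    intro E hE0 _
    have : E = ∅ := Finset.card_eq_zero.mp (Nat.le_zero.mp hE0)
    subst this
    exact ⟨fun _ => 0, fun e he => absurd he (by simp), fun e he => absurd he (by simp)⟩
  | succ n ih =>
    intro E hcard hE
    rcases Finset.eq_empty_or_nonempty E with rfl | ⟨e₀, he₀⟩
    · exact ⟨fun _ => 0, fun e he => absurd he (by simp), fun e he => absurd he (by simp)⟩
    · obtain ⟨x, y₀, rfl⟩ : ∃ x y, e₀ = s(x, y) := by
        induction e₀ with
        | h p q => exact ⟨p, q, rfl⟩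
      obtain ⟨c, hc, hb⟩ := ih (E.erase s(x, y₀))
        (by have := Finset.card_erase_of_mem he₀; omega)
        (fun e he => hE (Finset.mem_of_mem_erase he))
      exact extend_coloring G D hdeg E hE x y₀ he₀ c hc hb

end VizingMain
set_option linter.unusedSectionVars false
section Scaffold
variable {V : Type*} [Fintype V] [DecidableEq V]

theorem vizing (G : SimpleGraph V) [DecidableRel G.Adj] :
    ∃ c : Sym2 V → ℕ, (∀ e ∈ G.edgeSet, c e < G.maxDegree + 1) ∧ IsProperEdgeColoring G c := by
  obtain ⟨c, hc, hb⟩ := color_all G G.maxDegree (fun v => G.degree_le_maxDegree v)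
    G.edgeFinset.card G.edgeFinset le_rfl (by simp)
  refine ⟨c, fun e he => hb e (SimpleGraph.mem_edgeFinset.mpr he), ?_⟩
  intro e he f hf hef hsh
  exact hc e (SimpleGraph.mem_edgeFinset.mpr he) f (SimpleGraph.mem_edgeFinset.mpr hf) hef hsh

lemma sep_full (G : SimpleGraph V) [DecidableRel G.Adj] {s t : V} (hst : s ≠ t) :
    Separates G (↑G.edgeFinset) s t := by
  intro h
  have hbot : G.deleteEdges ↑G.edgeFinset = ⊥ := by
    ext a b
    simp [SimpleGraph.deleteEdges_adj]
  rw [hbot] at h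
  exact hst (SimpleGraph.reachable_bot.mp h)

end Scaffold
theorem rd_chain (G : SimpleGraph V) [DecidableRel G.Adj] [Nontrivial V] (hG : G.Connected) :
    edgeConn G ≤ lamPlus G ∧ lamPlus G ≤ rd G ∧ rd G ≤ chromIndex G ∧
      chromIndex G ≤ G.maxDegree + 1 := by
  classical
  obtain ⟨s₀, t₀, hst₀⟩ := exists_pair_ne V
  set cE : Sym2 V → ℕ := fun e => (G.edgeFinset.toList).idxOf e with hcE
  have hcEbd : ∀ e ∈ G.edgeSet, cE e < G.edgeFinset.card := by
    intro e he
    have hm : e ∈ G.edgeFinset.toList := by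
      rw [Finset.mem_toList]; exact SimpleGraph.mem_edgeFinset.mpr he
    have := List.idxOf_lt_length_iff.mpr hm
    simpa [hcE, Finset.length_toList] using this
  have hcEinj : ∀ a ∈ G.edgeSet, ∀ b ∈ G.edgeSet, cE a = cE b → a = b := by
    intro a ha b hb h
    have hma : a ∈ G.edgeFinset.toList := by
      rw [Finset.mem_toList]; exact SimpleGraph.mem_edgeFinset.mpr ha
    have hmb : b ∈ G.edgeFinset.toList := by
      rw [Finset.mem_toList]; exact SimpleGraph.mem_edgeFinset.mpr hb
    exact (List.idxOf_inj hma).mp h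
  have hEsub : (↑G.edgeFinset : Set (Sym2 V)) ⊆ G.edgeSet := by
    intro e he; simpa using he
  have hlamST_ne : ∀ s t : V, s ≠ t →
      G.edgeFinset.card ∈ {n | ∃ S : Finset (Sym2 V), ↑S ⊆ G.edgeSet ∧
        Separates G ↑S s t ∧ S.card = n} :=
    fun s t hst => ⟨G.edgeFinset, hEsub, sep_full G hst, rfl⟩
  -- inequality 1
  have h1 : ∀ s t : V, s ≠ t → edgeConn G ≤ lamST G s t := by
    intro s t hst
    have hne : {n | ∃ S : Finset (Sym2 V), ↑S ⊆ G.edgeSet ∧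
        Separates G ↑S s t ∧ S.card = n}.Nonempty := ⟨_, hlamST_ne s t hst⟩
    obtain ⟨S, hS, hsep, hcard⟩ := Nat.sInf_mem hne
    exact Nat.sInf_le ⟨S, hS, fun hc => hsep (hc.preconnected s t), hcard⟩
  have hbdd : BddAbove {n | ∃ s t : V, s ≠ t ∧ lamST G s t = n} := by
    refine ⟨G.edgeFinset.card, ?_⟩
    rintro n ⟨s, t, hst, rfl⟩
    exact Nat.sInf_le (hlamST_ne s t hst)
  have hEC : edgeConn G ≤ lamPlus G :=
    le_trans (h1 s₀ t₀ hst₀) (le_csSup hbdd ⟨s₀, t₀, hst₀, rfl⟩)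
  -- rd set nonempty
  have hrd_ne : {k | ∃ c : Sym2 V → ℕ, (∀ e ∈ G.edgeSet, c e < k) ∧
      IsRDColoring G c}.Nonempty := by
    refine ⟨G.edgeFinset.card, cE, hcEbd, ?_⟩
    intro s t hst
    exact ⟨G.edgeFinset, hEsub,
      fun a ha b hb h => hcEinj a (hEsub ha) b (hEsub hb) h, sep_full G hst⟩
  -- inequality 2
  have h2 : lamPlus G ≤ rd G := by
    obtain ⟨c, hcbd, hcrd⟩ := Nat.sInf_mem hrd_ne
    refine csSup_le ⟨lamST G s₀ t₀, ⟨s₀, t₀, hst₀, rfl⟩⟩ ?_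
    rintro n ⟨s, t, hst, rfl⟩
    obtain ⟨S, hSsub, hSinj, hSsep⟩ := hcrd s t hst
    have hcard : S.card ≤ rd G := by
      rw [← Finset.card_image_of_injOn hSinj]
      have hsub : S.image c ⊆ Finset.range (rd G) := by
        intro m hm
        obtain ⟨e, he, rfl⟩ := Finset.mem_image.mp hm
        exact Finset.mem_range.mpr (hcbd e (hSsub he))
      simpa using Finset.card_le_card hsub
    exact le_trans (Nat.sInf_le ⟨S, hSsub, hSsep, rfl⟩) hcard
  -- chromIndex set nonempty
  have hchrom_ne : {k | ∃ c : Sym2 V → ℕ, (∀ e ∈ G.edgeSet, c e < k) ∧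
      IsProperEdgeColoring G c}.Nonempty := by
    refine ⟨G.edgeFinset.card, cE, hcEbd, ?_⟩
    intro e he f hf hef _ h
    exact hef (hcEinj e he f hf h)
  -- inequality 3
  have h3 : rd G ≤ chromIndex G := by
    obtain ⟨c, hcbd, hcprop⟩ := Nat.sInf_mem hchrom_ne
    apply Nat.sInf_le
    refine ⟨c, hcbd, ?_⟩
    intro s t hst
    refine ⟨G.incidenceFinset s, ?_, ?_, ?_⟩
    · intro e he
      rw [Finset.mem_coe, SimpleGraph.mem_incidenceFinset] at he
      exact he.1
    · intro a ha b hb hab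
      rw [Finset.mem_coe, SimpleGraph.mem_incidenceFinset] at ha hb
      by_contra hne
      exact hcprop a ha.1 b hb.1 hne ⟨s, ha.2, hb.2⟩ hab
    · intro hreach
      obtain ⟨p⟩ := hreach
      cases p with
      | nil => exact hst rfl
      | @cons _ v _ h p =>
        rw [SimpleGraph.deleteEdges_adj] at h
        exact h.2 (by
          rw [Finset.mem_coe, SimpleGraph.mem_incidenceFinset]
          exact ⟨h.1, Sym2.mem_mk_left s v⟩)
  -- inequality 4
  have h4 : chromIndex G ≤ G.maxDegree + 1 := by
    obtain ⟨c, hb, hp⟩ := vizing G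
    exact Nat.sInf_le ⟨c, hb, hp⟩
  exact ⟨hEC, h2, h3, h4⟩
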